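/- arXiv:2207.04278 — 4 statements merged into one kernel-verified Lean document; each statement's English description precedes it below -/
import Mathlib

section
/- Let A = I, C = [[λ, -μ],[μ, λ]] with μ ≠ 0 (complex conjugate eigenvalues λ ± iμ), and B ∈ M₂(ℝ) arbitrary. Then the identity det(Iξ² + 2Bξη + Cη²) = (ξ² + η²)(ξ² + κ²η²) cannot hold as polynomials in ξ, η for any real κ > 0. -/
open Matrix

/-- When `C = [[λ, -μ],[μ, λ]]` with `μ ≠ 0` (complex conjugate eigenvalues), the
characteristic form of the system `(I, B, C)` can never equal `(ξ² + η²)(ξ² + κ²η²)`. -/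
theorem stmt5 (lam mu : ℝ) (hm : mu ≠ 0) (B : Matrix (Fin 2) (Fin 2) ℝ) (κ : ℝ) (hκ : 0 < κ) :
    ¬ (∀ ξ η : ℝ,
      (ξ ^ 2 • (1 : Matrix (Fin 2) (Fin 2) ℝ) + (2 * ξ * η) • B
        + η ^ 2 • !![lam, -mu; mu, lam]).det = (ξ ^ 2 + η ^ 2) * (ξ ^ 2 + κ ^ 2 * η ^ 2)) := by
  intro h
  have h0 := h 0 1
  have h1 := h 1 1
  have h2 := h (-1) 1
  have h3 := h 2 1
  have h4 := h (-2) 1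
  simp [Matrix.det_fin_two, Matrix.add_apply, Matrix.smul_apply, Matrix.one_apply]
    at h0 h1 h2 h3 h4
  -- coefficient of ξ³η vanishes : trace of B is zero
  have f1 : B 0 0 + B 1 1 = 0 := by linear_combination (h3 - h4 - 2*h1 + 2*h2)/24
  -- coefficient of ξη³ vanishes
  have f3 : lam*(B 0 0 + B 1 1) - mu*(B 0 1 - B 1 0) = 0 := by
    linear_combination (8*h1 - 8*h2 - h3 + h4)/24
  have f2 : B 0 1 - B 1 0 = 0 := by
    have hz : mu * (B 0 1 - B 1 0) = 0 := by linear_combination lam * f1 - f3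
    rcases mul_eq_zero.mp hz with hz | hz
    · exact absurd hz hm
    · exact hz
  -- coefficient of η⁴
  have f4 : lam^2 + mu^2 - κ^2 = 0 := by linear_combination h0
  -- coefficient of ξ²η²
  have e2 : 2*lam + 4*(B 0 0)*(B 1 1) - 4*(B 0 1)*(B 1 0) - 1 - κ^2 = 0 := by
    linear_combination (h1 + h2)/2 - h0
  have key : (1 - lam)^2 + mu^2 + 4*(B 0 0)^2 + 4*(B 0 1)^2 = 0 := by
    linear_combination -e2 + f4 + 4*(B 0 0)*f1 + 4*(B 0 1)*f2
  have hmu : 0 < mu^2 := by positivity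
  nlinarith [sq_nonneg (1 - lam), sq_nonneg (B 0 0), sq_nonneg (B 0 1)]
end

section
/- Let A = I, C = [[λ, 1],[0, λ]] with λ ≠ 0 real, and B ∈ M₂(ℝ). If det(Iξ² + 2Bξη + Cη²) = (ξ² + η²)(ξ² + κ²η²) as polynomials in ξ, η for some κ > 0, then B is upper triangular (i.e. its (2,1) entry is zero). -/
open Matrix

/-- When `C = [[λ, 1],[0, λ]]` is a nontrivial Jordan block (`λ ≠ 0` real) and the
characteristic form of the system `(I, B, C)` equals `(ξ² + η²)(ξ² + κ²η²)` for some
`κ > 0`, then `B` is upper triangular. -/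
theorem stmt6 (lam : ℝ) (hl : lam ≠ 0) (B : Matrix (Fin 2) (Fin 2) ℝ) (κ : ℝ) (hκ : 0 < κ)
    (h : ∀ ξ η : ℝ,
      (ξ ^ 2 • (1 : Matrix (Fin 2) (Fin 2) ℝ) + (2 * ξ * η) • B
        + η ^ 2 • !![lam, 1; 0, lam]).det = (ξ ^ 2 + η ^ 2) * (ξ ^ 2 + κ ^ 2 * η ^ 2)) :
    B 1 0 = 0 := by
  have h1 := h 1 1
  have h2 := h 1 (-1)
  have h3 := h 1 2
  have h4 := h 1 (-2)
  simp [Matrix.det_fin_two, Matrix.add_apply, Matrix.smul_apply, Matrix.one_apply,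
    Matrix.cons_val_zero, Matrix.cons_val_one, Matrix.head_cons, Matrix.head_fin_const] at h1 h2 h3 h4
  have hs : B 0 0 + B 1 1 = 0 := by linear_combination (h1 - h2) / 3 - (h3 - h4) / 24
  linear_combination -(h1 - h2) / 4 + (1 + lam) * hs
end

section
/- Let 0 ≤ τ < σ < 1. Define the symmetric 4×4 block matrix E = [[K, L],[Lᵗ, M]] with K = (1+τ)·diag((1+σ)(σ+τ), (1-σ)(σ-τ)), M = (1-τ)·diag((1-σ)(σ+τ), (1+σ)(σ-τ)), and L = [[0, (1+σ)(τ²-σ²)],[(1-σ)(τ²-σ²), 0]]. Then E is positive semidefinite. -/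
open Matrix

/-- For `0 ≤ τ < σ < 1`, the symmetric block matrix `E = [[K, L],[Lᵗ, M]]` built from the
canonical blocks is positive semidefinite. -/
theorem stmt9 (τ σ : ℝ) (h0 : 0 ≤ τ) (h1 : τ < σ) (h2 : σ < 1) :
    (Matrix.fromBlocks
      ((1 + τ) • !![(1 + σ) * (σ + τ), 0; 0, (1 - σ) * (σ - τ)])
      !![0, (1 + σ) * (τ ^ 2 - σ ^ 2); (1 - σ) * (τ ^ 2 - σ ^ 2), 0]
      (!![0, (1 + σ) * (τ ^ 2 - σ ^ 2); (1 - σ) * (τ ^ 2 - σ ^ 2), 0])ᵀ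
      ((1 - τ) • !![(1 - σ) * (σ + τ), 0; 0, (1 + σ) * (σ - τ)])).PosSemidef := by
  rw [Matrix.posSemidef_iff_dotProduct_mulVec]
  constructor
  · ext i j
    fin_cases i <;> fin_cases j <;>
      simp [Matrix.fromBlocks, Matrix.conjTranspose, Matrix.transpose]
  · intro x
    have ha : (0:ℝ) ≤ 1 + σ := by linarith
    have hb : (0:ℝ) ≤ 1 - σ := by linarith
    have hc : (0:ℝ) ≤ σ + τ := by linarith
    have hd : (0:ℝ) ≤ σ - τ := by linarith
    have he : (0:ℝ) ≤ 1 + τ := by linarith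
    have hf : (0:ℝ) ≤ 1 - τ := by linarith
    set a := x (Sum.inl 0)
    set b := x (Sum.inl 1)
    set c := x (Sum.inr 0)
    set d := x (Sum.inr 1)
    simp [Matrix.fromBlocks, dotProduct, Matrix.mulVec, Fintype.sum_sum_type,
      Fin.sum_univ_two, Matrix.transpose_apply, Matrix.vecHead, Matrix.vecTail]
    have hp : (0:ℝ) < (1 + τ) * (σ + τ) := by nlinarith
    have hq : (0:ℝ) < (1 + τ) * (σ - τ) := by nlinarith
    have hF : 0 ≤ (1+τ)*(σ+τ)*a^2 - 2*(σ+τ)*(σ-τ)*a*d + (1-τ)*(σ-τ)*d^2 := by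
      nlinarith [sq_nonneg ((1+τ)*(σ+τ)*a - (σ+τ)*(σ-τ)*d),
        mul_nonneg (mul_nonneg (mul_nonneg (mul_nonneg (sq_nonneg d) hc) hd) hb) ha]
    have hG : 0 ≤ (1+τ)*(σ-τ)*b^2 - 2*(σ+τ)*(σ-τ)*b*c + (1-τ)*(σ+τ)*c^2 := by
      nlinarith [hq, sq_nonneg ((1+τ)*(σ-τ)*b - (σ+τ)*(σ-τ)*c),
        mul_nonneg (mul_nonneg (mul_nonneg (mul_nonneg (sq_nonneg c) hc) hd) hb) ha]
    nlinarith [mul_nonneg ha hF, mul_nonneg hb hG]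
end

section
/- Let κ ∈ (0,1] and λ ∈ [-κ, κ] \ {0, κ²}, and consider the matrices A = I, B = [[0,1],[-(1/4)(1-λ)(1-κ²/λ), 0]], C = diag(λ, κ²/λ). Then the characteristic form det(Aξ² + 2Bξη + Cη²) equals (ξ² + η²)(ξ² + κ²η²), and in particular the system with these matrices is elliptic. -/
open Matrix

/-- The characteristic form of the canonical system of Proposition 1, with `κ ∈ (0,1]`
and `λ ∈ [-κ,κ] \ {0, κ²}`, equals `(ξ² + η²)(ξ² + κ²η²)`; in particular the system is
elliptic. -/
theorem stmt18 (κ lam : ℝ) (hκ0 : 0 < κ) (hκ1 : κ ≤ 1) (h1 : -κ ≤ lam) (h2 : lam ≤ κ)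
    (h3 : lam ≠ 0) (h4 : lam ≠ κ ^ 2) :
    (∀ ξ η : ℝ,
      (ξ ^ 2 • (1 : Matrix (Fin 2) (Fin 2) ℝ)
        + (2 * ξ * η) • !![0, 1; -(1 / 4) * (1 - lam) * (1 - κ ^ 2 / lam), 0]
        + η ^ 2 • !![lam, 0; 0, κ ^ 2 / lam]).det
        = (ξ ^ 2 + η ^ 2) * (ξ ^ 2 + κ ^ 2 * η ^ 2)) ∧
    (∀ ξ η : ℝ,
      (ξ ^ 2 • (1 : Matrix (Fin 2) (Fin 2) ℝ)
        + (2 * ξ * η) • !![0, 1; -(1 / 4) * (1 - lam) * (1 - κ ^ 2 / lam), 0]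
        + η ^ 2 • !![lam, 0; 0, κ ^ 2 / lam]).det = 0 → ξ = 0 ∧ η = 0) := by
  have key : ∀ ξ η : ℝ,
      (ξ ^ 2 • (1 : Matrix (Fin 2) (Fin 2) ℝ)
        + (2 * ξ * η) • !![0, 1; -(1 / 4) * (1 - lam) * (1 - κ ^ 2 / lam), 0]
        + η ^ 2 • !![lam, 0; 0, κ ^ 2 / lam]).det
        = (ξ ^ 2 + η ^ 2) * (ξ ^ 2 + κ ^ 2 * η ^ 2) := by
    intro ξ η
    have h1 : (1 : Matrix (Fin 2) (Fin 2) ℝ) = !![1, 0; 0, 1] := by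
      ext i j; fin_cases i <;> fin_cases j <;> simp
    rw [h1]
    rw [show (ξ ^ 2 • !![(1:ℝ), 0; 0, 1]
        + (2 * ξ * η) • !![0, 1; -(1 / 4) * (1 - lam) * (1 - κ ^ 2 / lam), 0]
        + η ^ 2 • !![lam, 0; 0, κ ^ 2 / lam])
      = !![ξ ^ 2 + lam * η ^ 2, 2 * ξ * η;
           2 * ξ * η * (-(1 / 4) * (1 - lam) * (1 - κ ^ 2 / lam)), ξ ^ 2 + κ ^ 2 / lam * η ^ 2]
      from by ext i j; fin_cases i <;> fin_cases j <;> simp <;> ring]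
    rw [Matrix.det_fin_two_of]
    field_simp
    ring
  refine ⟨key, fun ξ η h => ?_⟩
  rw [key] at h
  by_contra hc
  push_neg at hc
  have hpos : 0 < (ξ ^ 2 + η ^ 2) * (ξ ^ 2 + κ ^ 2 * η ^ 2) := by
    have hne : ξ ≠ 0 ∨ η ≠ 0 := by
      by_cases hξ : ξ = 0
      · exact Or.inr (hc hξ)
      · exact Or.inl hξ
    rcases hne with h' | h' <;> positivity
  linarith
end
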